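/- arXiv:math/0606440 — 3 statements merged into one kernel-verified Lean document; each statement's English description precedes it below -/
import Mathlib

section
/- Let p_n be a monic real polynomial of degree n with simple real zeros and let p_{n−1} be a monic real polynomial of degree n−1 with simple real zeros, such that the zeros of p_{n−1} and p_n interlace and all zeros of both polynomials lie in [m,M]. Then for every z ∈ ℂ \ [m,M], the derivative of the ratio satisfies |(p_{n−1}/p_n)'(z)| ≤ 1/dist(z,[m,M])², where dist(z,[m,M]) is the distance from z to the interval [m,M]. -/
open Filter Topology Polynomial

/-- Argument in `[0, 2π)`. -/
noncomputable def argNN (z : ℂ) : ℝ :=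
  if Complex.arg z < 0 then Complex.arg z + 2 * Real.pi else Complex.arg z

/-- Square root with branch cut along the positive real axis:
`ρ e^{iθ} ↦ ρ^{1/2} e^{iθ/2}` with `θ ∈ [0, 2π)`. -/
noncomputable def csqrt (z : ℂ) : ℂ :=
  ((‖z‖ ^ ((1 : ℝ) / 2) : ℝ) : ℂ) * Complex.exp (Complex.I * (argNN z : ℂ) / 2)

/-- Principal cube root: `ρ e^{iθ} ↦ ρ^{1/3} e^{iθ/3}` with `θ ∈ (−π, π]`. -/
noncomputable def ccbrt (z : ℂ) : ℂ :=
  ((‖z‖ ^ ((1 : ℝ) / 3) : ℝ) : ℂ) * Complex.exp (Complex.I * (Complex.arg z : ℂ) / 3)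

/-- `ω₃ = e^{2πi/3}`. -/
noncomputable def ω₃ : ℂ := Complex.exp (2 * (Real.pi : ℂ) * Complex.I / 3)

/-- The function `φ` from the paper. -/
noncomputable def phi (z : ℂ) : ℂ :=
  (27 / 4) * ((3 * ω₃ / 2) * ccbrt z *
    (ω₃ * ccbrt (-1 + csqrt (1 - z)) + ccbrt (-1 - csqrt (1 - z))) - 1)

/-- The density `w` of the measure `υ_{[0,1]}`. -/
noncomputable def w (x : ℝ) : ℝ :=
  (Real.sqrt 3 / (4 * Real.pi)) *
    (((1 + Real.sqrt (1 - x)) ^ ((1 : ℝ) / 3) + (1 - Real.sqrt (1 - x)) ^ ((1 : ℝ) / 3)) /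
      (x ^ ((2 : ℝ) / 3) * Real.sqrt (1 - x)))


lemma monic_eq_prod_linear {n : ℕ} {p : Polynomial ℝ} (hp : p.Monic) (hdeg : p.natDegree = n)
    (y : ℕ → ℝ) (hroot : ∀ j < n, p.eval (y j) = 0)
    (hmono : ∀ j k : ℕ, j < k → k < n → y j < y k) :
    p = ∏ j ∈ Finset.range n, (Polynomial.X - Polynomial.C (y j)) := by
  classical
  set r : Polynomial ℝ := ∏ j ∈ Finset.range n, (X - C (y j)) with hr
  have hrm : r.Monic := monic_prod_of_monic _ _ fun j _ => monic_X_sub_C _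
  have hrdeg : r.natDegree = n := by
    rw [hr, natDegree_prod_of_monic _ _ fun j _ => monic_X_sub_C _]
    simp
  rcases Nat.eq_zero_or_pos n with hn0 | hn0
  · subst hn0
    rw [hp.natDegree_eq_zero.mp hdeg, hr]
    simp
  by_contra hne
  have hd0 : p - r ≠ 0 := sub_ne_zero_of_ne hne
  have hdlt : (p - r).degree < p.degree :=
    degree_sub_lt (by rw [degree_eq_natDegree hp.ne_zero, degree_eq_natDegree hrm.ne_zero, hdeg, hrdeg])
      hp.ne_zero (by rw [hp.leadingCoeff, hrm.leadingCoeff])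
  have hndlt : (p - r).natDegree < n := by
    have := (natDegree_lt_iff_degree_lt hd0).mpr (hdlt.trans_le (degree_le_natDegree.trans_eq (by rw [hdeg])))
    exact this
  have hyinj : Function.Injective (fun j : Fin n => y j) := by
    intro a b hab
    by_contra h
    have h' : (a : ℕ) ≠ (b : ℕ) := fun hh => h (Fin.ext hh)
    rcases lt_or_gt_of_ne h' with h1 | h1
    · exact absurd hab (ne_of_lt (hmono a b h1 b.isLt))
    · exact absurd hab.symm (ne_of_lt (hmono b a h1 a.isLt))
  have heval : ∀ j : Fin n, (p - r).eval (y j) = 0 := by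
    intro j
    have hrj : r.eval (y j) = 0 := by
      rw [hr, eval_prod]
      exact Finset.prod_eq_zero (Finset.mem_range.mpr j.isLt) (by simp)
    simp [eval_sub, hroot j j.isLt, hrj]
  exact hd0 (Polynomial.eq_zero_of_natDegree_lt_card_of_eval_eq_zero _ hyinj heval
    (by simpa using hndlt))


/-- under the interlacing hypotheses with zeros in `[m, M]`, the derivative of
the ratio `q/p` satisfies `|(q/p)'(z)| ≤ 1 / dist(z, [m, M])^2` outside `[m, M]`. -/
theorem ratio_deriv_bound (n : ℕ) (hn : 1 ≤ n) (p q : Polynomial ℝ)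
    (hp : p.Monic) (hpdeg : p.natDegree = n)
    (hq : q.Monic) (hqdeg : q.natDegree = n - 1)
    (y y' : ℕ → ℝ)
    (hyroot : ∀ j < n, p.eval (y j) = 0)
    (hymono : ∀ j k : ℕ, j < k → k < n → y j < y k)
    (hy'root : ∀ j < n - 1, q.eval (y' j) = 0)
    (hy'mono : ∀ j k : ℕ, j < k → k < n - 1 → y' j < y' k)
    (hinterlace : ∀ j < n - 1, y j < y' j ∧ y' j < y (j + 1))
    (m M : ℝ) (hmM : m ≤ M)
    (hyIn : ∀ j < n, y j ∈ Set.Icc m M)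
    (hy'In : ∀ j < n - 1, y' j ∈ Set.Icc m M) :
    ∀ z : ℂ, z ∉ (Complex.ofReal '' Set.Icc m M) →
      ‖deriv (fun u : ℂ => Polynomial.aeval u q / Polynomial.aeval u p) z‖
        ≤ 1 / (Metric.infDist z (Complex.ofReal '' Set.Icc m M)) ^ 2 := by
  classical
  intro z hz
  set S : Set ℂ := Complex.ofReal '' Set.Icc m M with hS
  set d : ℝ := Metric.infDist z S with hd
  -- basic facts about the distance
  have hSne : S.Nonempty := ⟨(m : ℂ), ⟨m, ⟨le_refl m, hmM⟩, rfl⟩⟩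
  have hSclosed : IsClosed S := (isCompact_Icc.image Complex.continuous_ofReal).isClosed
  have hd0 : 0 < d := (hSclosed.notMem_iff_infDist_pos hSne).mp hz
  have hdle : ∀ j < n, d ≤ ‖z - (y j : ℂ)‖ := by
    intro j hj
    have : d ≤ dist z ((y j : ℝ) : ℂ) :=
      Metric.infDist_le_dist_of_mem ⟨y j, hyIn j hj, rfl⟩
    rwa [Complex.dist_eq] at this
  have hzne : ∀ j < n, z ≠ ((y j : ℝ) : ℂ) := by
    intro j hj h
    exact hz (h ▸ ⟨y j, hyIn j hj, rfl⟩)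
  -- factorizations
  have hpfact := monic_eq_prod_linear hp hpdeg y hyroot hymono
  have hqfact := monic_eq_prod_linear hq hqdeg y' hy'root hy'mono
  -- monotone ≤ versions
  have hyle : ∀ a b : ℕ, a ≤ b → b < n → y a ≤ y b := by
    intro a b hab hb
    rcases hab.lt_or_eq with h | h
    · exact (hymono a b h hb).le
    · rw [h]
  have hy'le : ∀ a b : ℕ, a ≤ b → b < n - 1 → y' a ≤ y' b := by
    intro a b hab hb
    rcases hab.lt_or_eq with h | h
    · exact (hy'mono a b h hb).le
    · rw [h]
  have hyinj : Set.InjOn y ↑(Finset.range n) := by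
    intro a ha b hb hab
    simp only [Finset.coe_range, Set.mem_Iio] at ha hb
    by_contra h
    rcases lt_or_gt_of_ne h with h1 | h1
    · exact absurd hab (ne_of_lt (hymono a b h1 hb))
    · exact absurd hab.symm (ne_of_lt (hymono b a h1 ha))
  -- the coefficients
  set c : ℕ → ℝ := fun j => q.eval (y j) * ∏ k ∈ (Finset.range n).erase j, (y j - y k)⁻¹
    with hcdef
  -- Lagrange interpolation of q at the roots of p
  have hqsum : q = ∑ j ∈ Finset.range n, C (c j) *
      ∏ k ∈ (Finset.range n).erase j, (X - C (y k)) := by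
    have hdeglt : q.degree < (Finset.range n).card := by
      rw [Finset.card_range]
      calc q.degree ≤ (q.natDegree : WithBot ℕ) := degree_le_natDegree
        _ < (n : WithBot ℕ) := by
            rw [hqdeg]; exact_mod_cast Nat.sub_lt hn one_pos
    have h1 := Lagrange.eq_interpolate hyinj hdeglt
    rw [h1, Lagrange.interpolate_apply]
    refine Finset.sum_congr rfl ?_
    intro j hj
    rw [Lagrange.basis]
    unfold Lagrange.basisDivisor
    rw [Finset.prod_mul_distrib, ← map_prod, ← mul_assoc, ← map_mul]
  -- the sum of the coefficients is 1
  have hNmonic : ∀ j ∈ Finset.range n,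
      (∏ k ∈ (Finset.range n).erase j, (X - C (y k))).Monic :=
    fun j _ => monic_prod_of_monic _ _ fun k _ => monic_X_sub_C _
  have hNdeg : ∀ j ∈ Finset.range n,
      (∏ k ∈ (Finset.range n).erase j, (X - C (y k))).natDegree = n - 1 := by
    intro j hj
    rw [natDegree_prod_of_monic _ _ fun k _ => monic_X_sub_C _]
    simp [Finset.card_erase_of_mem hj]
  have hsum1 : ∑ j ∈ Finset.range n, c j = 1 := by
    have h1 := congrArg (fun r : Polynomial ℝ => r.coeff (n - 1)) hqsum
    simp only [finset_sum_coeff, coeff_C_mul] at h1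
    have h2 : q.coeff (n - 1) = 1 := by
      have := hq.coeff_natDegree
      rwa [hqdeg] at this
    rw [h2] at h1
    rw [h1]
    refine Finset.sum_congr rfl ?_
    intro j hj
    have h3 := (hNmonic j hj).coeff_natDegree
    rw [hNdeg j hj] at h3
    rw [h3, mul_one]
  -- nonnegativity of the coefficients
  have hcpos : ∀ j ∈ Finset.range n, 0 ≤ c j := by
    intro j hj
    rw [Finset.mem_range] at hj
    have hjle : j ≤ n - 1 := Nat.le_sub_one_of_lt hj
    have hqeval : q.eval (y j) = ∏ k ∈ Finset.range (n - 1), (y j - y' k) := by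
      rw [hqfact, eval_prod]
      simp
    have hsplitq : ∏ k ∈ Finset.range (n - 1), (y j - y' k)
        = (∏ k ∈ Finset.range j, (y j - y' k)) * ∏ k ∈ Finset.Ico j (n - 1), (y j - y' k) := by
      rw [Finset.range_eq_Ico, Finset.range_eq_Ico]
      exact (Finset.prod_Ico_consecutive _ (Nat.zero_le j) hjle).symm
    have hsplitd : ∏ k ∈ (Finset.range n).erase j, (y j - y k)⁻¹
        = (∏ k ∈ Finset.range j, (y j - y k)⁻¹) *
          ∏ k ∈ Finset.Ico j (n - 1), (y j - y (k + 1))⁻¹ := by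
      have hset : (Finset.range n).erase j = Finset.range j ∪ Finset.Ico (j + 1) n := by
        ext k
        simp only [Finset.mem_erase, Finset.mem_range, Finset.mem_union, Finset.mem_Ico]
        omega
      have hdisj : Disjoint (Finset.range j) (Finset.Ico (j + 1) n) := by
        rw [Finset.disjoint_left]
        intro k hk hk'
        simp only [Finset.mem_range] at hk
        simp only [Finset.mem_Ico] at hk'
        omega
      rw [hset, Finset.prod_union hdisj]
      congr 1
      rw [Finset.prod_Ico_eq_prod_range, Finset.prod_Ico_eq_prod_range]
      have he : n - (j + 1) = n - 1 - j := by omega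
      rw [he]
      refine Finset.prod_congr rfl ?_
      intro i _
      have : j + 1 + i = j + i + 1 := by omega
      rw [this]
    have hrearr : (∏ k ∈ Finset.range j, (y j - y' k)) *
          (∏ k ∈ Finset.Ico j (n - 1), (y j - y' k)) *
          ((∏ k ∈ Finset.range j, (y j - y k)⁻¹) *
            ∏ k ∈ Finset.Ico j (n - 1), (y j - y (k + 1))⁻¹)
        = (∏ k ∈ Finset.range j, (y j - y' k) * (y j - y k)⁻¹) *
          ∏ k ∈ Finset.Ico j (n - 1), (y j - y' k) * (y j - y (k + 1))⁻¹ := by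
      rw [Finset.prod_mul_distrib, Finset.prod_mul_distrib]
      ring
    show 0 ≤ q.eval (y j) * ∏ k ∈ (Finset.range n).erase j, (y j - y k)⁻¹
    rw [hqeval, hsplitq, hsplitd, hrearr]
    apply mul_nonneg
    · apply Finset.prod_nonneg
      intro k hk
      rw [Finset.mem_range] at hk
      have h1 : y' k < y j :=
        lt_of_lt_of_le (hinterlace k (by omega)).2 (hyle (k + 1) j (by omega) hj)
      have h2 : y k < y j := hymono k j hk hj
      exact mul_nonneg (sub_nonneg.2 h1.le) (inv_nonneg.2 (sub_nonneg.2 h2.le))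
    · apply Finset.prod_nonneg
      intro k hk
      rw [Finset.mem_Ico] at hk
      have h1 : y j < y' k :=
        lt_of_lt_of_le (hinterlace j (lt_of_le_of_lt hk.1 hk.2)).1 (hy'le j k hk.1 hk.2)
      have h2 : y j < y (k + 1) := hymono j (k + 1) (by omega) (by omega)
      rw [mul_nonneg_iff]
      exact Or.inr ⟨sub_nonpos.2 h1.le, inv_nonpos.2 (sub_nonpos.2 h2.le)⟩
  -- complex evaluations
  have hpC : ∀ u : ℂ, aeval u p = ∏ k ∈ Finset.range n, (u - (y k : ℂ)) := by
    intro u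
    rw [hpfact]
    simp [map_prod]
  have hqC : ∀ u : ℂ, aeval u q = ∑ j ∈ Finset.range n, ((c j : ℝ) : ℂ) *
      ∏ k ∈ (Finset.range n).erase j, (u - (y k : ℂ)) := by
    intro u
    conv_lhs => rw [hqsum]
    simp [map_sum, map_prod]
  -- the open set where the partial fraction identity holds
  set U : Set ℂ := (↑((Finset.range n).image (fun j => ((y j : ℝ) : ℂ))) : Set ℂ)ᶜ with hU
  have hUopen : IsOpen U := (Finset.finite_toSet _).isClosed.isOpen_compl
  have hmemU : ∀ u ∈ U, ∀ j < n, u ≠ ((y j : ℝ) : ℂ) := by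
    intro u hu j hj h
    apply hu
    simp only [Finset.coe_image, Set.mem_image, Finset.mem_coe, Finset.mem_range]
    exact ⟨j, hj, h.symm⟩
  have hzU : z ∈ U := by
    intro hmem
    simp only [Finset.coe_image, Set.mem_image, Finset.mem_coe, Finset.mem_range] at hmem
    obtain ⟨j, hj, hji⟩ := hmem
    exact hzne j hj hji.symm
  have hfg : ∀ u ∈ U, (fun u : ℂ => aeval u q / aeval u p) u
      = ∑ j ∈ Finset.range n, ((c j : ℝ) : ℂ) * (u - (y j : ℂ))⁻¹ := by
    intro u hu
    have hne : ∀ k < n, u - (y k : ℂ) ≠ 0 := fun k hk => sub_ne_zero.2 (hmemU u hu k hk)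
    show aeval u q / aeval u p = _
    rw [hqC, hpC, Finset.sum_div]
    refine Finset.sum_congr rfl ?_
    intro j hj
    rw [Finset.mem_range] at hj
    have hPe : (∏ k ∈ (Finset.range n).erase j, (u - (y k : ℂ))) ≠ 0 := by
      rw [Finset.prod_ne_zero_iff]
      intro k hk
      exact hne k (Finset.mem_range.1 (Finset.mem_of_mem_erase hk))
    rw [← Finset.mul_prod_erase _ _ (Finset.mem_range.2 hj)]
    rw [mul_div_assoc, mul_comm (u - (y j : ℂ)), div_mul_eq_div_div, div_self hPe]
    rw [one_div]
  -- the derivative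
  set D : ℂ := ∑ j ∈ Finset.range n, ((c j : ℝ) : ℂ) * (-1 / (z - (y j : ℂ)) ^ 2) with hD
  have hgD : HasDerivAt
      (fun u : ℂ => ∑ j ∈ Finset.range n, ((c j : ℝ) : ℂ) * (u - (y j : ℂ))⁻¹) D z := by
    rw [hD]
    apply HasDerivAt.fun_sum
    intro j hj
    have h1 : HasDerivAt (fun u : ℂ => u - (y j : ℂ)) 1 z := (hasDerivAt_id z).sub_const _
    have h2 := h1.inv (sub_ne_zero.2 (hzne j (Finset.mem_range.1 hj)))
    have h3 := h2.const_mul (((c j : ℝ) : ℂ))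
    exact h3
  have hderiv : deriv (fun u : ℂ => aeval u q / aeval u p) z = D := by
    have hev : (fun u : ℂ => aeval u q / aeval u p) =ᶠ[𝓝 z]
        fun u => ∑ j ∈ Finset.range n, ((c j : ℝ) : ℂ) * (u - (y j : ℂ))⁻¹ :=
      Filter.eventuallyEq_of_mem (hUopen.mem_nhds hzU) hfg
    rw [hev.deriv_eq, hgD.deriv]
  rw [hderiv]
  -- the final estimate
  have habs : ∀ j ∈ Finset.range n,
      ‖((c j : ℝ) : ℂ) * (-1 / (z - (y j : ℂ)) ^ 2)‖ ≤ c j * (1 / d ^ 2) := by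
    intro j hj
    rw [Finset.mem_range] at hj
    rw [norm_mul]
    have h1 : ‖((c j : ℝ) : ℂ)‖ = c j := by
      rw [Complex.norm_real, Real.norm_eq_abs, abs_of_nonneg (hcpos j (Finset.mem_range.2 hj))]
    rw [h1]
    refine mul_le_mul_of_nonneg_left ?_ (hcpos j (Finset.mem_range.2 hj))
    rw [norm_div, norm_pow, norm_neg, norm_one]
    refine one_div_le_one_div_of_le (pow_pos hd0 2) ?_
    exact pow_le_pow_left₀ hd0.le (hdle j hj) 2
  calc ‖D‖
      ≤ ∑ j ∈ Finset.range n, ‖((c j : ℝ) : ℂ) * (-1 / (z - (y j : ℂ)) ^ 2)‖ := by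
        rw [hD]
        refine (norm_sum_le _ _).trans ?_
        refine le_of_eq (Finset.sum_congr rfl fun j hj => ?_)
        rfl
    _ ≤ ∑ j ∈ Finset.range n, c j * (1 / d ^ 2) := Finset.sum_le_sum habs
    _ = 1 / d ^ 2 := by rw [← Finset.sum_mul, hsum1, one_mul]
end

section
/- For every y ∈ (0,1), ∫_y^1 u^{−1}·w(u) du = (3√3/(16π))·[ (1+3√(1−y))·(1−√(1−y))^{1/3} − (1−3√(1−y))·(1+√(1−y))^{1/3} ]/y^{2/3}, where w(u) = (√3/(4π))·((1+√(1−u))^{1/3} + (1−√(1−u))^{1/3})/(u^{2/3}·√(1−u)) and all roots are real roots of positive reals. -/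
open Filter Topology Polynomial

noncomputable def Faux (x : ℝ) : ℝ :=
  (3 * Real.sqrt 3 / (16 * Real.pi)) *
    (((1 + 3 * Real.sqrt (1 - x)) * (1 - Real.sqrt (1 - x)) ^ ((1 : ℝ) / 3)
        - (1 - 3 * Real.sqrt (1 - x)) * (1 + Real.sqrt (1 - x)) ^ ((1 : ℝ) / 3))
      / x ^ ((2 : ℝ) / 3))

lemma Faux_hasDerivAt (u : ℝ) (h0 : 0 < u) (h1 : u < 1) :
    HasDerivAt Faux (-(u⁻¹ * w u)) u := by
  have h1u : (0:ℝ) < 1 - u := by linarith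
  have hs0 : 0 < Real.sqrt (1 - u) := Real.sqrt_pos.mpr h1u
  have hs1 : Real.sqrt (1 - u) < 1 := by
    nlinarith [Real.sq_sqrt h1u.le, Real.sqrt_nonneg (1-u)]
  have hinner : HasDerivAt (fun x : ℝ => 1 - x) (-1) u := by
    simpa using (hasDerivAt_id u).const_sub 1
  have hsd : HasDerivAt (fun x : ℝ => Real.sqrt (1 - x))
      (1 / (2 * Real.sqrt (1 - u)) * (-1)) u :=
    (Real.hasDerivAt_sqrt h1u.ne').comp u hinner
  have has := (Real.hasDerivAt_rpow_const (p := (1:ℝ)/3)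
      (Or.inl (show (1:ℝ) + Real.sqrt (1-u) ≠ 0 by positivity))).comp u
      ((hasDerivAt_const u (1:ℝ)).add hsd)
  have hbs := (Real.hasDerivAt_rpow_const (p := (1:ℝ)/3)
      (Or.inl (show (1:ℝ) - Real.sqrt (1-u) ≠ 0 by linarith))).comp u
      ((hasDerivAt_const u (1:ℝ)).sub hsd)
  have hN := (((hasDerivAt_const u (1:ℝ)).add (hsd.const_mul 3)).mul hbs).sub
      (((hasDerivAt_const u (1:ℝ)).sub (hsd.const_mul 3)).mul has)
  have hden := Real.hasDerivAt_rpow_const (x := u) (p := (2:ℝ)/3) (Or.inl h0.ne')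
  have hq := hN.div hden (show u ^ ((2:ℝ)/3) ≠ 0 by positivity)
  have hF := hq.const_mul (3 * Real.sqrt 3 / (16 * Real.pi))
  have hF' : HasDerivAt Faux _ u := hF
  convert hF' using 1
  simp only [Function.comp_apply, Function.comp, Pi.add_apply, Pi.sub_apply, Pi.mul_apply] at *
  rw [w]
  set s := Real.sqrt (1 - u) with hs
  set a := (1 + s) ^ ((1:ℝ)/3) with ha
  set b := (1 - s) ^ ((1:ℝ)/3) with hb
  have hsq : s ^ 2 = 1 - u := Real.sq_sqrt h1u.le
  have hA0 : (0:ℝ) < 1 + s := by linarith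
  have hB0 : (0:ℝ) < 1 - s := by linarith
  have ha0 : 0 < a := Real.rpow_pos_of_pos hA0 _
  have hb0 : 0 < b := Real.rpow_pos_of_pos hB0 _
  have ha3 : a ^ 3 = 1 + s := by
    rw [ha, ← Real.rpow_natCast ((1 + s) ^ ((1:ℝ)/3)) 3, ← Real.rpow_mul hA0.le]
    norm_num
  have hb3 : b ^ 3 = 1 - s := by
    rw [hb, ← Real.rpow_natCast ((1 - s) ^ ((1:ℝ)/3)) 3, ← Real.rpow_mul hB0.le]
    norm_num
  have ea : (1 + s) ^ ((1:ℝ)/3 - 1) = (a ^ 2)⁻¹ := by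
    rw [show ((1:ℝ)/3 - 1) = (1/3 : ℝ) * (-2) by norm_num, Real.rpow_mul hA0.le, ← ha,
      show ((-2:ℝ)) = -((2:ℕ):ℝ) by norm_num, Real.rpow_neg ha0.le, Real.rpow_natCast]
  have eb : (1 - s) ^ ((1:ℝ)/3 - 1) = (b ^ 2)⁻¹ := by
    rw [show ((1:ℝ)/3 - 1) = (1/3 : ℝ) * (-2) by norm_num, Real.rpow_mul hB0.le, ← hb,
      show ((-2:ℝ)) = -((2:ℕ):ℝ) by norm_num, Real.rpow_neg hb0.le, Real.rpow_natCast]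
  have hu13 : u ^ ((1:ℝ)/3) = a * b := by
    rw [ha, hb, ← Real.mul_rpow hA0.le hB0.le, show (1+s)*(1-s) = 1 - s^2 by ring, hsq, show (1:ℝ) - (1 - u) = u by ring]
  have e23 : u ^ ((2:ℝ)/3) = (a * b) ^ 2 := by
    rw [show ((2:ℝ)/3) = (1/3 : ℝ) * ((2:ℕ):ℝ) by norm_num, Real.rpow_mul h0.le, hu13,
      Real.rpow_natCast]
  have e23' : u ^ ((2:ℝ)/3 - 1) = (a * b)⁻¹ := by
    rw [show ((2:ℝ)/3 - 1) = (1/3 : ℝ) * (-1) by norm_num, Real.rpow_mul h0.le, hu13,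
      Real.rpow_neg_one]
  rw [ea, eb, e23, e23']
  have hpi := Real.pi_ne_zero
  have hr3 : Real.sqrt 3 ≠ 0 := by positivity
  field_simp
  linear_combination (-32*(a+b)*b^3 - 4*u*(-9*(a+b)*b^3 + b*(1+3*s))) * ha3 + (-32*(a+b)*(1+s) - 4*u*(-9*(a+b)*(1+s) + a*(1-3*s))) * hb3 + (32*(a+b)) * hsq


open MeasureTheory in
/-- the integral identity behind the density of the asymptotic zero
distribution of the multiple Laguerre polynomials of the first kind. -/
theorem integral_w_over_u (y : ℝ) (hy : y ∈ Set.Ioo (0 : ℝ) 1) :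
    ∫ u in y..1, u⁻¹ * w u
      = (3 * Real.sqrt 3 / (16 * Real.pi)) *
        (((1 + 3 * Real.sqrt (1 - y)) * (1 - Real.sqrt (1 - y)) ^ ((1 : ℝ) / 3)
            - (1 - 3 * Real.sqrt (1 - y)) * (1 + Real.sqrt (1 - y)) ^ ((1 : ℝ) / 3))
          / y ^ ((2 : ℝ) / 3)) := by
  obtain ⟨h0y, h1y⟩ := hy
  -- continuity of -Faux on [y,1]
  have hsqc : ContinuousOn (fun x : ℝ => Real.sqrt (1 - x)) (Set.Icc y 1) :=
    (Real.continuous_sqrt.comp (continuous_const.sub continuous_id)).continuousOn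
  have hcont : ContinuousOn (fun x => -(Faux x)) (Set.Icc y 1) := by
    apply ContinuousOn.neg
    apply ContinuousOn.mul continuousOn_const
    apply ContinuousOn.div
    · exact (((continuousOn_const.add (continuousOn_const.mul hsqc)).mul
        ((continuousOn_const.sub hsqc).rpow_const (fun x _ => Or.inr (by norm_num)))).sub
        ((continuousOn_const.sub (continuousOn_const.mul hsqc)).mul
        ((continuousOn_const.add hsqc).rpow_const (fun x _ => Or.inr (by norm_num)))))
    · exact continuousOn_id.rpow_const (fun x _ => Or.inr (by norm_num))
    · intro x hx
      exact (Real.rpow_pos_of_pos (lt_of_lt_of_le h0y hx.1) _).ne'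
  have hderiv : ∀ x ∈ Set.Ioo y 1,
      HasDerivWithinAt (fun x => -(Faux x)) (x⁻¹ * w x) (Set.Ioi x) x := by
    intro x hx
    have := (Faux_hasDerivAt x (lt_trans h0y hx.1) hx.2).neg
    rw [neg_neg] at this
    exact this.hasDerivWithinAt
  have hInt : IntervalIntegrable (fun x => x⁻¹ * w x) volume y 1 := by
    have base : IntervalIntegrable (fun t : ℝ => t ^ (-(1/2) : ℝ)) volume 0 (1 - y) :=
      intervalIntegral.intervalIntegrable_rpow' (by norm_num)
    have base2 : IntervalIntegrable (fun x : ℝ => (1 - x) ^ (-(1/2) : ℝ)) volume y 1 := by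
      simpa using (base.comp_sub_left 1).symm
    have hg : ContinuousOn (fun x : ℝ => (Real.sqrt 3 / (4 * Real.pi)) *
        (((1 + Real.sqrt (1 - x)) ^ ((1:ℝ)/3) + (1 - Real.sqrt (1 - x)) ^ ((1:ℝ)/3)) /
          (x * x ^ ((2:ℝ)/3)))) (Set.uIcc y 1) := by
      rw [Set.uIcc_of_le h1y.le]
      apply ContinuousOn.mul continuousOn_const
      apply ContinuousOn.div
      · exact ((continuousOn_const.add hsqc).rpow_const (fun x _ => Or.inr (by norm_num))).add
          ((continuousOn_const.sub hsqc).rpow_const (fun x _ => Or.inr (by norm_num)))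
      · exact continuousOn_id.mul (continuousOn_id.rpow_const (fun x _ => Or.inr (by norm_num)))
      · intro x hx
        have hx0 : 0 < x := lt_of_lt_of_le h0y hx.1
        positivity
    have hmul := base2.continuousOn_mul hg
    rw [intervalIntegrable_iff] at hmul ⊢
    apply hmul.congr_fun _ measurableSet_uIoc
    intro x hx
    dsimp only
    rw [Set.uIoc_of_le h1y.le] at hx
    obtain ⟨hx1, hx2⟩ := hx
    have hx0 : 0 < x := lt_trans h0y hx1
    rcases eq_or_lt_of_le hx2 with h | h
    · subst h
      simp [w, Real.zero_rpow, w]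
    · have h1x : (0:ℝ) < 1 - x := by linarith
      have hsx : 0 < Real.sqrt (1 - x) := Real.sqrt_pos.mpr h1x
      have e1 : (1 - x) ^ (-(1/2) : ℝ) = (Real.sqrt (1 - x))⁻¹ := by
        rw [Real.sqrt_eq_rpow, ← Real.rpow_neg h1x.le]
      rw [e1, w]
      have hxr : (0:ℝ) < x ^ ((2:ℝ)/3) := Real.rpow_pos_of_pos hx0 _
      field_simp
  have key := intervalIntegral.integral_eq_sub_of_hasDeriv_right_of_le h1y.le hcont hderiv hInt
  have hF1 : Faux 1 = 0 := by
    simp [Faux]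
  rw [key, hF1]
  show -(0:ℝ) - -(Faux y) = _
  rw [Faux]
  ring
end

section
/- For every z ∈ (0,1), ∫_z^1 u^{−1/2}·w(u) du = 2√z·(3√3/(4π))·[ (1+√(1−z))^{1/3} − (1−√(1−z))^{1/3} ]/z^{2/3}, where w(u) = (√3/(4π))·((1+√(1−u))^{1/3} + (1−√(1−u))^{1/3})/(u^{2/3}·√(1−u)) and all roots are real roots of positive reals. -/
open Filter Topology Polynomial

/-- Antiderivative of `u ↦ u^{-1/2} w(u)` on `(0,1)`. -/
noncomputable def gAux (u : ℝ) : ℝ :=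
  -(3 * Real.sqrt 3 / (2 * Real.pi)) * (u ^ (-(1 : ℝ) / 6) *
    ((1 + Real.sqrt (1 - u)) ^ ((1 : ℝ) / 3) - (1 - Real.sqrt (1 - u)) ^ ((1 : ℝ) / 3)))

lemma gAux_hasDerivAt {u : ℝ} (hu0 : 0 < u) (hu1 : u < 1) :
    HasDerivAt gAux (u ^ (-(1 : ℝ) / 2) * w u) u := by
  have h1u : 0 < 1 - u := by linarith
  set s := Real.sqrt (1 - u) with hsdef
  have hs0 : 0 < s := Real.sqrt_pos.2 h1u
  have hs2 : s ^ 2 = 1 - u := Real.sq_sqrt h1u.le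
  have hs1 : s < 1 := by nlinarith
  have hds : HasDerivAt (fun x : ℝ => Real.sqrt (1 - x)) (-(1 / (2 * s))) u := by
    have h := (Real.hasDerivAt_sqrt h1u.ne').comp u ((hasDerivAt_id u).const_sub 1)
    have h2 : (fun x : ℝ => Real.sqrt (1 - x)) = (Real.sqrt ·) ∘ (fun x : ℝ => 1 - x) := rfl
    rw [h2]
    exact h.congr_deriv (by rw [← hsdef]; ring)
  have hA : HasDerivAt (fun x : ℝ => (1 + Real.sqrt (1 - x)) ^ ((1 : ℝ) / 3))
      (((1 : ℝ) / 3 * (1 + s) ^ ((1 : ℝ) / 3 - 1)) * -(1 / (2 * s))) u := by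
    have houter := Real.hasDerivAt_rpow_const (x := 1 + s) (p := (1 : ℝ) / 3)
      (Or.inl (by positivity))
    exact houter.comp u (hds.const_add 1)
  have hB : HasDerivAt (fun x : ℝ => (1 - Real.sqrt (1 - x)) ^ ((1 : ℝ) / 3))
      (((1 : ℝ) / 3 * (1 - s) ^ ((1 : ℝ) / 3 - 1)) * (1 / (2 * s))) u := by
    have houter := Real.hasDerivAt_rpow_const (x := 1 - s) (p := (1 : ℝ) / 3)
      (Or.inl (by nlinarith))
    have := houter.comp u (hds.const_sub 1)
    exact this.congr_deriv (by ring)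
  have hP : HasDerivAt (fun x : ℝ => x ^ (-(1 : ℝ) / 6)) ((-(1 : ℝ) / 6) * u ^ (-(1 : ℝ) / 6 - 1)) u :=
    Real.hasDerivAt_rpow_const (Or.inl hu0.ne')
  have hg := (hP.mul (hA.sub hB)).const_mul (-(3 * Real.sqrt 3 / (2 * Real.pi)))
  have key : u ^ (-(1 : ℝ) / 2) * w u
      = -(3 * Real.sqrt 3 / (2 * Real.pi)) *
        (((-(1 : ℝ) / 6) * u ^ (-(1 : ℝ) / 6 - 1)) *
            ((1 + s) ^ ((1 : ℝ) / 3) - (1 - s) ^ ((1 : ℝ) / 3))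
          + u ^ (-(1 : ℝ) / 6) *
            ((((1 : ℝ) / 3 * (1 + s) ^ ((1 : ℝ) / 3 - 1)) * -(1 / (2 * s)))
              - (((1 : ℝ) / 3 * (1 - s) ^ ((1 : ℝ) / 3 - 1)) * (1 / (2 * s))))) := by
    have hpi : Real.pi ≠ 0 := Real.pi_ne_zero
    have h1s : (0 : ℝ) < 1 + s := by linarith
    have h1s' : (0 : ℝ) < 1 - s := by linarith
    have e1 : (1 + s) ^ ((1 : ℝ) / 3 - 1) = (1 + s) ^ ((1 : ℝ) / 3) / (1 + s) := by
      rw [Real.rpow_sub h1s, Real.rpow_one]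
    have e2 : (1 - s) ^ ((1 : ℝ) / 3 - 1) = (1 - s) ^ ((1 : ℝ) / 3) / (1 - s) := by
      rw [Real.rpow_sub h1s', Real.rpow_one]
    have e3 : u ^ (-(1 : ℝ) / 6 - 1) = u ^ (-(1 : ℝ) / 6) / u := by
      rw [Real.rpow_sub hu0, Real.rpow_one]
    have e5' : u ^ (-(1 : ℝ) / 6) * u ^ ((2 : ℝ) / 3) = u ^ (-(1 : ℝ) / 2) * u := by
      have h₁ := Real.rpow_add hu0 (-(1 : ℝ) / 2) 1
      have h₂ := Real.rpow_add hu0 (-(1 : ℝ) / 6) ((2 : ℝ) / 3)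
      rw [Real.rpow_one] at h₁
      rw [← h₁, ← h₂]
      norm_num
    have e5 : u ^ (-(1 : ℝ) / 2) = u ^ (-(1 : ℝ) / 6) * u ^ ((2 : ℝ) / 3) / u := by
      rw [eq_div_iff hu0.ne']
      exact e5'.symm
    rw [w, e1, e2, e3, e5, ← hsdef]
    set A := (1 + s) ^ ((1 : ℝ) / 3) with hA'
    set B := (1 - s) ^ ((1 : ℝ) / 3) with hB'
    set P := u ^ (-(1 : ℝ) / 6) with hP'
    set Q := u ^ ((2 : ℝ) / 3) with hQ'
    have hQ0 : Q ≠ 0 := (Real.rpow_pos_of_pos hu0 _).ne'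
    have hu' : u = 1 - s ^ 2 := by linarith
    rw [hu']
    have h1s2 : (1 : ℝ) - s ^ 2 ≠ 0 := by nlinarith
    field_simp
    ring
  rw [key]
  exact hg

/-- the integral identity behind the density of the asymptotic zero
distribution of the multiple orthogonal polynomials associated with Macdonald functions. -/
theorem integral_w_over_sqrt_u (z : ℝ) (hz : z ∈ Set.Ioo (0 : ℝ) 1) :
    ∫ u in z..1, u ^ (-(1 : ℝ) / 2) * w u
      = 2 * Real.sqrt z * ((3 * Real.sqrt 3 / (4 * Real.pi)) *
        (((1 + Real.sqrt (1 - z)) ^ ((1 : ℝ) / 3)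
            - (1 - Real.sqrt (1 - z)) ^ ((1 : ℝ) / 3))
          / z ^ ((2 : ℝ) / 3))) := by
  obtain ⟨hz0, hz1⟩ := hz
  have hderiv : ∀ x ∈ Set.Ioo z 1, HasDerivAt gAux (x ^ (-(1 : ℝ) / 2) * w x) x :=
    fun x hx => gAux_hasDerivAt (hz0.trans hx.1) hx.2
  have hcs : ContinuousOn (fun x : ℝ => Real.sqrt (1 - x)) (Set.Icc z 1) :=
    (Real.continuous_sqrt.comp (continuous_const.sub continuous_id)).continuousOn
  have hcA : ContinuousOn (fun x : ℝ => (1 + Real.sqrt (1 - x)) ^ ((1 : ℝ) / 3)) (Set.Icc z 1) :=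
    (continuousOn_const.add hcs).rpow_const (fun x _ => Or.inr (by norm_num))
  have hcB : ContinuousOn (fun x : ℝ => (1 - Real.sqrt (1 - x)) ^ ((1 : ℝ) / 3)) (Set.Icc z 1) :=
    (continuousOn_const.sub hcs).rpow_const (fun x _ => Or.inr (by norm_num))
  have hcP : ContinuousOn (fun x : ℝ => x ^ (-(1 : ℝ) / 6)) (Set.Icc z 1) :=
    continuousOn_id.rpow_const (fun x hx => Or.inl (hz0.trans_le hx.1).ne')
  have hcont : ContinuousOn gAux (Set.Icc z 1) :=
    continuousOn_const.mul (hcP.mul (hcA.sub hcB))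
  have hnonneg : ∀ x ∈ Set.Ioo z 1, 0 ≤ x ^ (-(1 : ℝ) / 2) * w x := by
    intro x hx
    have hx0 : 0 < x := hz0.trans hx.1
    have hx1 : x < 1 := hx.2
    have hsle : Real.sqrt (1 - x) ≤ 1 := by
      have h := Real.sqrt_le_sqrt (show 1 - x ≤ 1 by linarith)
      rwa [Real.sqrt_one] at h
    have h1 : (0 : ℝ) ≤ 1 + Real.sqrt (1 - x) := by positivity
    have h2 : (0 : ℝ) ≤ 1 - Real.sqrt (1 - x) := by linarith
    rw [w]
    have := Real.pi_pos
    apply mul_nonneg (Real.rpow_nonneg hx0.le _)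
    apply mul_nonneg (by positivity)
    apply div_nonneg (add_nonneg (Real.rpow_nonneg h1 _) (Real.rpow_nonneg h2 _))
    positivity
  have hint : IntervalIntegrable (fun x => x ^ (-(1 : ℝ) / 2) * w x) MeasureTheory.volume z 1 := by
    apply intervalIntegral.intervalIntegrable_deriv_of_nonneg
    · rwa [Set.uIcc_of_le hz1.le]
    · rw [min_eq_left hz1.le, max_eq_right hz1.le]; exact hderiv
    · rw [min_eq_left hz1.le, max_eq_right hz1.le]; exact hnonneg
  have hFTC := intervalIntegral.integral_eq_sub_of_hasDeriv_right_of_le hz1.le hcont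
    (fun x hx => (hderiv x hx).hasDerivWithinAt) hint
  rw [hFTC]
  have h1 : gAux 1 = 0 := by
    norm_num [gAux]
  rw [h1, zero_sub, gAux]
  have e : Real.sqrt z = z ^ (-(1 : ℝ) / 6) * z ^ ((2 : ℝ) / 3) := by
    rw [Real.sqrt_eq_rpow, ← Real.rpow_add hz0]
    norm_num
  rw [e]
  have hQ0 : z ^ ((2 : ℝ) / 3) ≠ 0 := (Real.rpow_pos_of_pos hz0 _).ne'
  have hpi : Real.pi ≠ 0 := Real.pi_ne_zero
  field_simp
  ring
end
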